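/- Let [4] be the fourth quantum integer for q with q+q⁻¹ = √((5+√21)/2), Z(T²Q) = √(151/18 + (41/6)√(7/3)), Z(TQ²) = (2√3+√7)/3, and Z(T²Q²) = (7/3)√((11+√21)/6). Then Z(T²Q)²/[4] + Z(TQ²)²/[4] = Z(T²Q²). -/

import Mathlib

/-- Norm computation for the relation R3(TQ):
    Z(T²Q)²/[4] + Z(TQ²)²/[4] = Z(T²Q²), where [4] = q³+q+q⁻¹+q⁻³. -/
theorem stmt_12 (q : ℝ) (hq : 1 < q)
    (hδ : q + q⁻¹ = Real.sqrt ((5 + Real.sqrt 21)/2)) :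
    (Real.sqrt (151/18 + (41/6) * Real.sqrt (7/3)))^2 / (q^3 + q + q⁻¹ + q⁻¹^3)
      + ((2*Real.sqrt 3 + Real.sqrt 7)/3)^2 / (q^3 + q + q⁻¹ + q⁻¹^3)
    = (7/3) * Real.sqrt ((11 + Real.sqrt 21)/6) := by
  have hq0 : q ≠ 0 := by linarith
  have hqi : q * q⁻¹ = 1 := mul_inv_cancel₀ hq0
  set s := Real.sqrt 21 with hs
  have hs0 : 0 ≤ s := Real.sqrt_nonneg _
  have hs2 : s^2 = 21 := Real.sq_sqrt (by norm_num)
  have h73 : Real.sqrt (7/3) = s/3 := by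
    rw [show (7:ℝ)/3 = (s/3)^2 by nlinarith]
    exact Real.sqrt_sq (by positivity)
  have h37 : Real.sqrt 3 * Real.sqrt 7 = s := by
    rw [← Real.sqrt_mul (by norm_num)]; norm_num; exact hs.symm
  have h3 : (Real.sqrt 3)^2 = 3 := Real.sq_sqrt (by norm_num)
  have h7 : (Real.sqrt 7)^2 = 7 := Real.sq_sqrt (by norm_num)
  set d := Real.sqrt ((5+s)/2) with hd
  have hd2 : d^2 = (5+s)/2 := Real.sq_sqrt (by positivity)
  have hdpos : 0 < d := Real.sqrt_pos.mpr (by positivity)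
  have hud : Real.sqrt ((11+s)/6) * d = (6+s)/3 := by
    rw [hd, ← Real.sqrt_mul (by positivity)]
    rw [show (11+s)/6 * ((5+s)/2) = ((6+s)/3)^2 by nlinarith]
    exact Real.sqrt_sq (by positivity)
  have hA : (Real.sqrt (151/18 + (41/6) * Real.sqrt (7/3)))^2
      = 151/18 + (41/6) * (s/3) := by
    rw [h73]; exact Real.sq_sqrt (by positivity)
  have hF : q^3 + q + q⁻¹ + q⁻¹^3 = d^3 - 2*d := by
    have h1 : q^3 + q + q⁻¹ + q⁻¹^3 = (q+q⁻¹)^3 - 2*(q+q⁻¹) := by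
      linear_combination (-3*(q+q⁻¹)) * hqi
    rw [h1, hδ]
  have hFval : d^3 - 2*d = d * (1+s)/2 := by
    have h2 : d^3 = d * d^2 := by ring
    rw [h2, hd2]; ring
  have hFpos : (0:ℝ) < d * (1+s)/2 := by positivity
  rw [hF, hFval, ← add_div, div_eq_iff (ne_of_gt hFpos), hA]
  have key : (7:ℝ)/3 * Real.sqrt ((11+s)/6) * (d * (1+s)/2) = (189+49*s)/18 := by
    have h4 : (7:ℝ)/3 * Real.sqrt ((11+s)/6) * (d * (1+s)/2)
        = 7/3 * (Real.sqrt ((11+s)/6) * d) * ((1+s)/2) := by ring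
    rw [h4, hud]; nlinarith
  rw [key]
  linear_combination (4/9)*h3 + (1/9)*h7 + (4/9)*h37
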